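/- Let G = (V, E) be a finite DAG and let E₁ ⊇ E be another edge relation on V. Let V_i, V_j ∈ V be nonadjacent in G, and let T_ij = {V_i, V_j} ∪ {w ∈ V : (w,V_i) ∈ E₁ or (V_i,w) ∈ E₁ or (w,V_j) ∈ E₁ or (V_j,w) ∈ E₁}. Then there exists a set C ⊆ T_ij \ {V_i, V_j} with {V_i} ⊥d {V_j} | C in G. -/
import Mathlib


/-! Basic notions for directed graphs given by an edge relation `E` on a vertex type `V`. -/

/-- Two vertices are adjacent if there is an edge between them in either direction. -/
def UndirAdj {V : Type*} (E : V → V → Prop) (a b : V) : Prop := E a b ∨ E b a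

/-- `Descend E v w` means `w` is a descendant of `v`: it is reachable from `v`
by a directed path of length at least 1. -/
def Descend {V : Type*} (E : V → V → Prop) (v w : V) : Prop := Relation.TransGen E v w

/-- A directed graph is a DAG iff its transitive closure is irreflexive. -/
def IsDAG {V : Type*} (E : V → V → Prop) : Prop := Irreflexive (Relation.TransGen E)

/-- `f 0, f 1, …, f m` is a path: the vertices are distinct and each consecutive
pair is adjacent (in either direction). -/
def IsPathOn {V : Type*} (E : V → V → Prop) (m : ℕ) (f : ℕ → V) : Prop :=
  (∀ i ≤ m, ∀ j ≤ m, f i = f j → i = j) ∧ ∀ i < m, UndirAdj E (f i) (f (i + 1))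

/-- The interior vertex `f i` is a collider on the path `f` if both of its
neighboring path edges point into it. -/
def IsCollider {V : Type*} (E : V → V → Prop) (f : ℕ → V) (i : ℕ) : Prop :=
  E (f (i - 1)) (f i) ∧ E (f (i + 1)) (f i)

/-- The path `f 0, …, f m` is active given the conditioning set `C`: every interior
non-collider is outside `C`, and every interior collider is in `C` or has a
descendant in `C`. -/
def ActivePath {V : Type*} (E : V → V → Prop) (C : Set V) (m : ℕ) (f : ℕ → V) : Prop :=
  IsPathOn E m f ∧ ∀ i, 0 < i → i < m →
    (¬ IsCollider E f i → f i ∉ C) ∧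
    (IsCollider E f i → f i ∈ C ∨ ∃ w ∈ C, Descend E (f i) w)

/-- `C` d-separates `X` and `Y`: no path from a vertex of `X` to a vertex of `Y`
is active given `C`. -/
def DSep {V : Type*} (E : V → V → Prop) (X Y C : Set V) : Prop :=
  ∀ (m : ℕ) (f : ℕ → V), f 0 ∈ X → f m ∈ Y → ¬ ActivePath E C m f

/-- The immoral descendants of `vi, vj`: their common children together with all
descendants of those common children. -/
def IMD {V : Type*} (E : V → V → Prop) (vi vj : V) : Set V :=
  {c | E vi c ∧ E vj c} ∪ {w | ∃ c, E vi c ∧ E vj c ∧ Descend E c w}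

/-- An independence preserving augmentation (IPA) of a nonadjacent pair `(vi, vj)`:
disjoint sets `Si, Sj ⊆ V \ {vi, vj}` such that for some conditioning set `C`
disjoint from `Si ∪ {vi} ∪ Sj ∪ {vj}`, the sets `Si ∪ {vi}` and `Sj ∪ {vj}`
are d-separated given `C`. -/
def IsIPA {V : Type*} (E : V → V → Prop) (vi vj : V) (Si Sj : Set V) : Prop :=
  Disjoint Si Sj ∧ vi ∉ Si ∧ vj ∉ Si ∧ vi ∉ Sj ∧ vj ∉ Sj ∧
  ∃ C : Set V, Disjoint C ((Si ∪ {vi}) ∪ (Sj ∪ {vj})) ∧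
    DSep E (Si ∪ {vi}) (Sj ∪ {vj}) C

open Classical in
/-- Key lemma: if `b` is not a descendant of `a` and `a, b` are nonadjacent,
then the parents of `a` d-separate `a` from `b`. -/
lemma key_sep {V : Type*} (E : V → V → Prop) (hdag : IsDAG E) (a b : V)
    (hab : a ≠ b) (hnadj : ¬ UndirAdj E a b) (hnd : ¬ Descend E a b) :
    DSep E {a} {b} {w | E w a} := by
  intro m f hf0 hfm hact
  simp only [Set.mem_singleton_iff] at hf0 hfm
  obtain ⟨⟨hinj, hadj⟩, hint⟩ := hact
  -- m ≥ 2
  have hm2 : 2 ≤ m := by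
    rcases Nat.lt_or_ge m 2 with h | h
    · interval_cases m
      · exact absurd (hf0 ▸ hfm) hab
      · exact absurd (hf0 ▸ hfm ▸ hadj 0 (by omega)) hnadj
    · exact h
  -- forward chains give descendants
  have chain : ∀ k, 1 ≤ k → (∀ l < k, E (f l) (f (l + 1))) →
      Relation.TransGen E (f 0) (f k) := by
    intro k hk hfor
    induction k with
    | zero => omega
    | succ n ih =>
      rcases Nat.eq_or_lt_of_le hk with h | h
      · exact Relation.TransGen.single (by simpa [← h] using hfor 0 (by omega))
      · exact (ih (by omega) (fun l hl => hfor l (by omega))).tail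
          (hfor n (by omega))
  -- case on the first edge
  rcases hadj 0 (by omega) with hfwd | hbwd
  · -- E (f 0) (f 1): follow the forward run
    have hnall : ¬ ∀ l < m, E (f l) (f (l + 1)) := by
      intro h
      exact hnd (hf0 ▸ hfm ▸ chain m (by omega) h)
    push_neg at hnall
    obtain ⟨k0, hk0m, hk0⟩ := hnall
    have hex : ∃ k, ¬ E (f k) (f (k + 1)) := ⟨k0, hk0⟩
    set k := Nat.find hex with hkdef
    have hkspec : ¬ E (f k) (f (k + 1)) := Nat.find_spec hex
    have hmin : ∀ l < k, E (f l) (f (l + 1)) := by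
      intro l hl
      by_contra hc
      have h2 := Nat.find_min hex (show l < Nat.find hex by rw [← hkdef]; exact hl)
      exact h2 hc
    have hkm : k < m := by
      rcases Nat.lt_or_ge k m with h | h
      · exact h
      · exact absurd (hmin k0 (by omega)) hk0
    have hk1 : 1 ≤ k := by
      by_contra hc
      exact hkspec (by simpa [Nat.le_zero.mp (by omega : k ≤ 0)] using hfwd)
    have hback : E (f (k + 1)) (f k) := by
      rcases hadj k hkm with h | h
      · exact absurd h hkspec
      · exact h
    have hcol : IsCollider E f k := by
      refine ⟨?_, hback⟩
      have h := hmin (k - 1) (by omega)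
      have e : k - 1 + 1 = k := by omega
      rwa [e] at h
    have hdesc : Relation.TransGen E (f 0) (f k) := chain k hk1 hmin
    rcases (hint k (by omega) hkm).2 hcol with hmem | ⟨w, hw, hdw⟩
    · exact hdag (f 0) (hdesc.tail (by simpa [hf0] using hmem))
    · exact hdag (f 0) ((hdesc.trans hdw).tail (by simpa [hf0] using hw))
  · -- E (f 1) (f 0): f 1 is a parent of a
    have h1m : 1 < m := by omega
    have h1C : f 1 ∈ {w | E w a} := by simpa [hf0] using hbwd
    rcases Classical.em (IsCollider E f 1) with hcol | hncol
    · -- then E (f 0) (f 1) and E (f 1) (f 0): 2-cycle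
      have := hcol.1
      simp only [Nat.sub_self] at this
      exact hdag (f 0) ((Relation.TransGen.single this).tail hbwd)
    · exact (hint 1 (by omega) h1m).1 hncol h1C

/-- d-separation is symmetric. -/
lemma dsep_symm {V : Type*} (E : V → V → Prop) (X Y C : Set V)
    (h : DSep E X Y C) : DSep E Y X C := by
  intro m f hf0 hfm hact
  obtain ⟨⟨hinj, hadj⟩, hint⟩ := hact
  refine h m (fun i => f (m - i)) (by simpa) (by simpa) ⟨⟨?_, ?_⟩, ?_⟩
  · intro i hi j hj hij
    have := hinj (m - i) (by omega) (m - j) (by omega) hij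
    omega
  · intro i hi
    have h1 : m - i = m - (i + 1) + 1 := by omega
    have := hadj (m - (i + 1)) (by omega)
    rw [← h1] at this
    exact this.symm
  · intro i hi him
    have hcoleq : IsCollider E (fun i => f (m - i)) i ↔ IsCollider E f (m - i) := by
      have e1 : m - (i - 1) = m - i + 1 := by omega
      have e2 : m - (i + 1) = m - i - 1 := by omega
      unfold IsCollider
      show (E (f (m - (i - 1))) (f (m - i)) ∧ E (f (m - (i + 1))) (f (m - i))) ↔ _
      rw [e1, e2]
      tauto
    have := hint (m - i) (by omega) (by omega)
    constructor
    · intro hnc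
      exact this.1 (fun hc => hnc (hcoleq.mpr hc))
    · intro hc
      exact this.2 (hcoleq.mp hc)

/-- Lemma: `T_ij` contains a separating set.
Let `G = (V, E)` be a finite DAG, `E₁ ⊇ E` a supergraph relation, and `vi, vj`
nonadjacent in `G`. Then the set `T_ij` consisting of `vi, vj` and all their
distance-1 neighbors in `E₁` contains a set `C ⊆ T_ij \ {vi, vj}` that
d-separates `vi` from `vj` in `G`. -/
theorem stmt_15 {V : Type*} [Fintype V] (E E₁ : V → V → Prop)
    (hsub : ∀ a b : V, E a b → E₁ a b)
    (hdag : IsDAG E) (vi vj : V) (hne : vi ≠ vj)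
    (hnadj : ¬ UndirAdj E vi vj)
    (Tij : Set V)
    (hTij : Tij = {vi, vj} ∪
      {w : V | E₁ w vi ∨ E₁ vi w ∨ E₁ w vj ∨ E₁ vj w}) :
    ∃ C : Set V, C ⊆ Tij \ {vi, vj} ∧ DSep E {vi} {vj} C := by
  rcases Classical.em (Descend E vi vj) with hd | hd
  · -- vj is a descendant of vi, so vi is not a descendant of vj: use parents of vj
    have hnd : ¬ Descend E vj vi := fun h => hdag vi (hd.trans h)
    refine ⟨{w | E w vj}, ?_, ?_⟩
    · intro w hw
      have hw' : E w vj := hw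
      refine ⟨by
        rw [hTij]
        exact Or.inr (Or.inr (Or.inr (Or.inl (hsub _ _ hw')))), ?_⟩
      simp only [Set.mem_insert_iff, Set.mem_singleton_iff, not_or]
      constructor
      · rintro rfl
        exact hnadj (Or.inl hw')
      · rintro rfl
        exact hdag _ (Relation.TransGen.single hw')
    · exact dsep_symm E _ _ _
        (key_sep E hdag vj vi hne.symm
          (fun h => hnadj h.symm) hnd)
  · refine ⟨{w | E w vi}, ?_, ?_⟩
    · intro w hw
      have hw' : E w vi := hw
      refine ⟨by
        rw [hTij]
        exact Or.inr (Or.inl (hsub _ _ hw')), ?_⟩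
      simp only [Set.mem_insert_iff, Set.mem_singleton_iff, not_or]
      constructor
      · rintro rfl
        exact hdag _ (Relation.TransGen.single hw')
      · rintro rfl
        exact hnadj (Or.inr hw')
    · exact key_sep E hdag vi vj hne hnadj hd
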